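/- Let G be a graph with vertex set {v₀, v₁, …, v_n} such that for each i ∈ [n], the set N(v_i) ∩ {v_j : 0 ≤ j ≤ i−1} is nonempty and the subgraph of G induced by this set is connected. Then G is DP-good. -/

import Mathlib

open SimpleGraph

attribute [local instance] Classical.propDecidable

universe u
variable {V : Type u}

/-- `H` (on vertex set `V × Fin m`) is an `m`-fold cover of `G`. -/
def IsCover (G : SimpleGraph V) (m : ℕ) (H : SimpleGraph (V × Fin m)) : Prop :=
  (∀ (u : V) (i j : Fin m), i ≠ j → H.Adj (u, i) (u, j)) ∧
  (∀ (u v : V) (i j : Fin m), u ≠ v → H.Adj (u, i) (v, j) → G.Adj u v) ∧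
  (∀ (u v : V) (i j j' : Fin m), u ≠ v → H.Adj (u, i) (v, j) → H.Adj (u, i) (v, j') → j = j')

/-- A full cover: every matching between fibers over an edge is perfect. -/
def IsFullCover (G : SimpleGraph V) (m : ℕ) (H : SimpleGraph (V × Fin m)) : Prop :=
  IsCover G m H ∧ ∀ u v : V, G.Adj u v → ∀ i : Fin m, ∃ j : Fin m, H.Adj (u, i) (v, j)

/-- Number of ℋ-colorings (independent transversals) of a cover graph `H`. -/
noncomputable def coverCount {m : ℕ} (H : SimpleGraph (V × Fin m)) : ℕ :=
  Nat.card {f : V → Fin m // ∀ u v : V, ¬ H.Adj (u, f u) (v, f v)}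

/-- The DP color function. -/
noncomputable def PDP (G : SimpleGraph V) (m : ℕ) : ℕ :=
  sInf {n | ∃ H : SimpleGraph (V × Fin m), IsCover G m H ∧ n = coverCount H}

/-- Number of proper m-colorings, i.e. the chromatic polynomial evaluated at m. -/
noncomputable def properCount (G : SimpleGraph V) (m : ℕ) : ℕ :=
  Nat.card {f : V → Fin m // ∀ u v : V, G.Adj u v → f u ≠ f v}

/-- Girth of an edge: length of a shortest cycle through `e` (∞ if none). -/
noncomputable def edgeGirth (G : SimpleGraph V) (e : Sym2 V) : ℕ∞ :=
  ⨅ (a : V) (p : G.Walk a a) (_ : p.IsCycle) (_ : e ∈ p.edges), (p.length : ℕ∞)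

/-- Girth of an edge set `E₀`: length of a shortest cycle meeting `E₀` in an odd
number of edges (∞ if none). -/
noncomputable def setGirth (G : SimpleGraph V) (E₀ : Set (Sym2 V)) : ℕ∞ :=
  ⨅ (a : V) (p : G.Walk a a) (_ : p.IsCycle)
    (_ : Odd (p.edges.countP (fun e => e ∈ E₀))), (p.length : ℕ∞)

/-- The canonical cover graph `H_{G,m}`. -/
def canonicalCover (G : SimpleGraph V) (m : ℕ) : SimpleGraph (V × Fin m) where
  Adj x y := (x.1 = y.1 ∧ x.2 ≠ y.2) ∨ (G.Adj x.1 y.1 ∧ x.2 = y.2)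
  symm := ⟨by
    rintro ⟨u, i⟩ ⟨v, j⟩ (⟨h1, h2⟩ | ⟨h1, h2⟩)
    · exact Or.inl ⟨h1.symm, h2.symm⟩
    · exact Or.inr ⟨h1.symm, h2.symm⟩⟩
  loopless := ⟨by rintro ⟨u, i⟩ (⟨h1, h2⟩ | ⟨h1, h2⟩) <;> simp_all⟩

/-- `D` is an orientation of the edge set `E₀`. -/
def IsOrientation (D : Set (V × V)) (E₀ : Set (Sym2 V)) : Prop :=
  (∀ x ∈ D, s(x.1, x.2) ∈ E₀) ∧
  ∀ u v : V, s(u, v) ∈ E₀ → ((u, v) ∈ D ↔ (v, u) ∉ D)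

/-- The directed edges `D` are balanced on the closed walk `p`. -/
noncomputable def BalancedOn {G : SimpleGraph V} (D : Set (V × V)) {a : V}
    (p : G.Walk a a) : Prop :=
  p.darts.countP (fun d => (d.fst, d.snd) ∈ D) =
    p.darts.countP (fun d => (d.snd, d.fst) ∈ D)

/-- A DP-good graph. -/
def DPGood [Fintype V] (G : SimpleGraph V) : Prop :=
  G.Connected ∧
  ∃ T : SimpleGraph V, T ≤ G ∧ T.IsTree ∧
    ∃ (q : ℕ) (e : Fin q → Sym2 V),
      Function.Injective e ∧
      Set.range e = G.edgeSet \ T.edgeSet ∧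
      (∀ i j : Fin q, i ≤ j → edgeGirth G (e i) ≤ edgeGirth G (e j)) ∧
      ∀ i : Fin q, ∃ g : ℕ, Odd g ∧ edgeGirth G (e i) = (g : ℕ∞) ∧
        ∃ (a : V) (C : G.Walk a a), C.IsCycle ∧ e i ∈ C.edges ∧ C.length = g ∧
          ∀ f ∈ C.edges, f ∈ T.edgeSet ∪ {e j | j ≤ i}


namespace DPAux

variable {V : Type} (G : SimpleGraph V) {n : ℕ} (v : Fin (n + 1) → V) (hv : Function.Bijective v)

noncomputable def idx (x : V) : Fin (n + 1) := (Equiv.ofBijective v hv).symm x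

@[simp] lemma v_idx (x : V) : v (idx v hv x) = x := (Equiv.ofBijective v hv).apply_symm_apply x

@[simp] lemma idx_v (i : Fin (n + 1)) : idx v hv (v i) = i :=
  (Equiv.ofBijective v hv).symm_apply_apply i

lemma idx_inj {x y : V} (hxy : idx v hv x = idx v hv y) : x = y := by
  have := congrArg v hxy; simpa using this

def S (i : Fin (n + 1)) : Set V := {x | G.Adj (v i) x ∧ ∃ j : Fin (n + 1), j < i ∧ x = v j}

lemma mem_S_iff {i : Fin (n + 1)} {x : V} :
    x ∈ S G v i ↔ G.Adj (v i) x ∧ idx v hv x < i := by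
  constructor
  · rintro ⟨ha, j, hj, rfl⟩; simpa using ⟨ha, hj⟩
  · rintro ⟨ha, hj⟩; exact ⟨ha, idx v hv x, hj, (v_idx v hv x).symm⟩

noncomputable def P (i : Fin (n + 1)) : V :=
  if hne : (S G v i).Nonempty then hne.choose else v 0

lemma P_mem {i : Fin (n + 1)} (hne : (S G v i).Nonempty) : P G v i ∈ S G v i := by
  rw [P, dif_pos hne]; exact hne.choose_spec

lemma P_ne (hv : Function.Bijective v) {i : Fin (n + 1)} (hi : 0 < i.val) : P G v i ≠ v i := by
  by_cases hne : (S G v i).Nonempty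
  · have := (mem_S_iff G v hv).1 (P_mem G v hne)
    intro hc
    rw [hc] at this
    simp at this
  · rw [P, dif_neg hne]
    intro hc
    have h0 : (0 : Fin (n + 1)) = i := hv.1 hc
    rw [← h0] at hi
    simp at hi

def T (hv : Function.Bijective v) : SimpleGraph V where
  Adj x y := ∃ i : Fin (n + 1), 0 < i.val ∧
    ((x = v i ∧ y = P G v i) ∨ (y = v i ∧ x = P G v i))
  symm := ⟨by
    rintro x y ⟨i, hi, h⟩
    exact ⟨i, hi, h.symm⟩⟩
  loopless := ⟨by
    rintro x ⟨i, hi, (⟨h1, h2⟩ | ⟨h1, h2⟩)⟩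
    · exact P_ne G v hv hi (h2.symm.trans h1)
    · exact P_ne G v hv hi (h2.symm.trans h1)⟩

def Hyp : Prop :=
  ∀ i : Fin (n + 1), 0 < i.val → (S G v i).Nonempty ∧ (G.induce (S G v i)).Connected

lemma T_le (hv : Function.Bijective v) (hh : Hyp G v) : T G v hv ≤ G := by
  rintro x y ⟨i, hi, (⟨rfl, rfl⟩ | ⟨rfl, rfl⟩)⟩
  · exact ((P_mem G v (hh i hi).1).1)
  · exact ((P_mem G v (hh i hi).1).1).symm

lemma T_connected (hv : Function.Bijective v) (hh : Hyp G v) : (T G v hv).Connected := by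
  have key : ∀ k : ℕ, ∀ x : V, (idx v hv x).val = k → (T G v hv).Reachable x (v 0) := by
    intro k
    induction k using Nat.strong_induction_on with
    | _ k ih =>
      intro x hx
      rcases Nat.eq_zero_or_pos k with h0 | h0
      · have : idx v hv x = 0 := by subst h0; exact Fin.ext hx
        have : x = v 0 := by rw [← this]; simp
        rw [this]
      · have hi : 0 < (idx v hv x).val := hx ▸ h0
        have hadj : (T G v hv).Adj x (P G v (idx v hv x)) :=
          ⟨idx v hv x, hi, Or.inl ⟨(v_idx v hv x).symm, rfl⟩⟩
        have hPlt : idx v hv (P G v (idx v hv x)) < idx v hv x :=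
          ((mem_S_iff G v hv).1 (P_mem G v (hh _ hi).1)).2
        have := ih (idx v hv (P G v (idx v hv x))).val (by omega) _ rfl
        exact hadj.reachable.trans this
  haveI : Nonempty V := ⟨v 0⟩
  exact ⟨fun x y => (key _ x rfl).trans (key _ y rfl).symm⟩

lemma adj_down (hv : Function.Bijective v) (hh : Hyp G v) {x y : V}
    (hadj : (T G v hv).Adj x y) (hlt : idx v hv y < idx v hv x) : y = P G v (idx v hv x) := by
  obtain ⟨i, hi, (⟨rfl, rfl⟩ | ⟨rfl, rfl⟩)⟩ := hadj
  · simp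
  · exfalso
    have hPlt : idx v hv (P G v i) < i := ((mem_S_iff G v hv).1 (P_mem G v (hh _ hi).1)).2
    simp only [idx_v] at hlt
    exact absurd (hlt.trans hPlt) (lt_irrefl _)

lemma T_acyclic (hv : Function.Bijective v) (hh : Hyp G v) : (T G v hv).IsAcyclic := by
  intro a c hc
  classical
  have hsup : a ∈ c.support := c.start_mem_support
  obtain ⟨x, hx, hmax⟩ := c.support.toFinset.exists_max_image (fun z => (idx v hv z).val)
    ⟨a, List.mem_toFinset.2 hsup⟩
  rw [List.mem_toFinset] at hx
  have hmax' : ∀ z ∈ c.support, (idx v hv z).val ≤ (idx v hv x).val := by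
    intro z hz; exact hmax z (List.mem_toFinset.2 hz)
  set c' := c.rotate x hx with hc'def
  have hcyc' : c'.IsCycle := hc.rotate hx
  have hsub : ∀ z, z ∈ c'.support → z ∈ c.support := by
    intro z hz
    rcases (SimpleGraph.Walk.mem_support_iff c').1 hz with rfl | hz'
    · exact hx
    · have hperm := c.support_rotate x hx
      have : z ∈ c.support.tail := hperm.mem_iff.1 hz'
      exact List.mem_of_mem_tail this
  obtain ⟨y, hxy, q, hq⟩ := SimpleGraph.Walk.not_nil_iff.1 hcyc'.not_nil
  have hlen3 := hcyc'.three_le_length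
  rw [hq] at hlen3
  simp only [SimpleGraph.Walk.length_cons] at hlen3
  have hqnn : ¬ q.reverse.Nil := by
    rw [SimpleGraph.Walk.nil_iff_length_eq, SimpleGraph.Walk.length_reverse]
    omega
  obtain ⟨z, hxz, q2, hq2⟩ := SimpleGraph.Walk.not_nil_iff.1 hqnn
  have hzq : s(x, z) ∈ q.edges := by
    have : s(x, z) ∈ q.reverse.edges := by
      rw [hq2]; simp
    rwa [SimpleGraph.Walk.edges_reverse, List.mem_reverse] at this
  have hzc : z ∈ c.support := by
    apply hsub
    rw [hq, SimpleGraph.Walk.support_cons]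
    exact List.mem_cons_of_mem _ (SimpleGraph.Walk.snd_mem_support_of_mem_edges q hzq)
  have hyc : y ∈ c.support := by
    apply hsub
    rw [hq, SimpleGraph.Walk.support_cons]
    exact List.mem_cons_of_mem _ q.start_mem_support
  have hylt : idx v hv y < idx v hv x := by
    have h1 := hmax' y hyc
    have h2 : (idx v hv y).val ≠ (idx v hv x).val :=
      fun hcv => hxy.ne' (idx_inj v hv (Fin.ext hcv))
    rw [Fin.lt_def]; omega
  have hzlt : idx v hv z < idx v hv x := by
    have h1 := hmax' z hzc
    have h2 : (idx v hv z).val ≠ (idx v hv x).val :=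
      fun hcv => hxz.ne' (idx_inj v hv (Fin.ext hcv))
    rw [Fin.lt_def]; omega
  have hy := adj_down G v hv hh hxy hylt
  have hz := adj_down G v hv hh hxz hzlt
  have hyz : y = z := hy.trans hz.symm
  have htr : ¬ s(x, y) ∈ q.edges := by
    have := hcyc'.isTrail
    rw [hq, SimpleGraph.Walk.isTrail_cons] at this
    exact this.2
  have : s(x, y) = s(x, z) := by rw [hyz]
  exact htr (this ▸ hzq)

noncomputable def distS (i : Fin (n + 1)) (w : V) : ℕ :=
  if hw : w ∈ S G v i ∧ P G v i ∈ S G v i then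
    (G.induce (S G v i)).dist ⟨P G v i, hw.2⟩ ⟨w, hw.1⟩
  else 0

noncomputable def rank (hv : Function.Bijective v) (e : Sym2 V) : ℕ :=
  Sym2.lift ⟨fun x y =>
    if idx v hv x < idx v hv y then (n + 1) * (idx v hv y).val + distS G v (idx v hv y) x
    else (n + 1) * (idx v hv x).val + distS G v (idx v hv x) y, by
      intro x y
      dsimp only
      rcases lt_trichotomy (idx v hv x) (idx v hv y) with hlt | heq | hgt
      · rw [if_pos hlt, if_neg (asymm hlt)]
      · have hxy : x = y := idx_inj v hv heq
        subst hxy; rfl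
      · rw [if_neg (asymm hgt), if_pos hgt]⟩ e

lemma rank_eq (hv : Function.Bijective v) {x y : V} (hlt : idx v hv y < idx v hv x) :
    rank G v hv s(x, y) = (n + 1) * (idx v hv x).val + distS G v (idx v hv x) y := by
  rw [rank, Sym2.lift_mk]
  exact if_neg (asymm hlt)

lemma distS_le [Fintype V] (hv : Function.Bijective v) (i : Fin (n + 1)) (w : V) :
    distS G v i w ≤ n := by
  rw [distS]
  split
  · rename_i hw
    set H := G.induce (S G v i)
    set a : ↥(S G v i) := ⟨P G v i, hw.2⟩
    set b : ↥(S G v i) := ⟨w, hw.1⟩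
    by_cases hr : H.Reachable a b
    · obtain ⟨p, hp, hlen⟩ := hr.exists_path_of_dist
      have h1 : p.length < Fintype.card ↥(S G v i) := hp.length_lt
      have h2 : Fintype.card ↥(S G v i) ≤ Fintype.card V :=
        Fintype.card_le_of_injective Subtype.val Subtype.val_injective
      have h3 : Fintype.card V = n + 1 := by
        rw [← Fintype.card_of_bijective hv, Fintype.card_fin]
      omega
    · rw [SimpleGraph.dist_eq_zero_of_not_reachable hr]
      omega
  · omega

lemma exists_step (hv : Function.Bijective v) (hh : Hyp G v) {i : Fin (n + 1)}
    (hi : 0 < i.val) {u : V} (hu : u ∈ S G v i) (hne : u ≠ P G v i) :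
    ∃ z ∈ S G v i, G.Adj u z ∧ distS G v i z < distS G v i u := by
  obtain ⟨hSne, hconn⟩ := hh i hi
  have hP : P G v i ∈ S G v i := P_mem G v hSne
  set H := G.induce (S G v i) with hH
  set a : ↥(S G v i) := ⟨P G v i, hP⟩
  set b : ↥(S G v i) := ⟨u, hu⟩
  have hab : b ≠ a := fun hc => hne (congrArg Subtype.val hc)
  have hdpos : 0 < H.dist a b := by
    rw [SimpleGraph.dist_comm]
    exact hconn.pos_dist_of_ne hab
  obtain ⟨p, hp, hlen⟩ := (hconn a b).exists_path_of_dist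
  obtain ⟨w, hadj, q, hq⟩ := SimpleGraph.Walk.exists_eq_cons_of_ne hab p.reverse
  refine ⟨w.val, w.2, ?_, ?_⟩
  · have : H.Adj b w := hadj
    simpa [hH, SimpleGraph.induce] using this
  · have hd1 : distS G v i u = H.dist a b := by
      rw [distS, dif_pos ⟨hu, hP⟩]
    have hd2 : distS G v i w.val = H.dist a ⟨w.val, w.2⟩ := by
      rw [distS, dif_pos ⟨w.2, hP⟩]
    have hqlen : q.length = H.dist a b - 1 := by
      have : p.reverse.length = H.dist a b := by
        rw [SimpleGraph.Walk.length_reverse, hlen]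
      rw [hq, SimpleGraph.Walk.length_cons] at this
      omega
    have hdw : H.dist a ⟨w.val, w.2⟩ ≤ q.length := by
      rw [SimpleGraph.dist_comm]
      exact SimpleGraph.dist_le q
    rw [hd1, hd2]
    have hwq : (⟨w.val, w.2⟩ : ↥(S G v i)) = w := rfl
    rw [hwq] at hdw ⊢
    omega

lemma triangle_isCycle {x y z : V} (hxy : G.Adj x y) (hyz : G.Adj y z)
    (hzx : G.Adj z x) (hxz : x ≠ z) :
    (SimpleGraph.Walk.cons hxy (SimpleGraph.Walk.cons hyz
      (SimpleGraph.Walk.cons hzx SimpleGraph.Walk.nil))).IsCycle := by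
  have h1 : x ≠ y := hxy.ne
  have h2 : y ≠ z := hyz.ne
  simp [SimpleGraph.Walk.isCycle_def, SimpleGraph.Walk.isTrail_cons,
    SimpleGraph.Walk.isTrail_def, List.Nodup, h1, h2, hxz, Sym2.eq_iff,
    h1.symm, h2.symm, hxz.symm, Ne.symm]

lemma triangle_aux [Fintype V] (hv : Function.Bijective v) (hh : Hyp G v) {x y : V}
    (hadj : G.Adj x y) (hlt : idx v hv y < idx v hv x)
    (hnt : s(x, y) ∉ (T G v hv).edgeSet) :
    ∃ z : V, G.Adj y z ∧ G.Adj z x ∧ x ≠ z ∧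
      (s(y, z) ∈ (T G v hv).edgeSet ∨
        (s(y, z) ∈ G.edgeSet ∧ rank G v hv s(y, z) < rank G v hv s(x, y))) ∧
      (s(x, z) ∈ (T G v hv).edgeSet ∨
        (s(x, z) ∈ G.edgeSet ∧ rank G v hv s(x, z) < rank G v hv s(x, y))) := by
  set i := idx v hv x with hidef
  have hx : v i = x := v_idx v hv x
  have hi : 0 < i.val := by
    have := Fin.lt_def.1 hlt
    omega
  have hyS : y ∈ S G v i := (mem_S_iff G v hv).2 ⟨by rw [hx]; exact hadj, hlt⟩
  have hyP : y ≠ P G v i := by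
    intro hcon
    exact hnt ((SimpleGraph.mem_edgeSet _).2 ⟨i, hi, Or.inl ⟨hx.symm, hcon⟩⟩)
  obtain ⟨z, hzS, hyzadj, hdlt⟩ := exists_step G v hv hh hi hyS hyP
  have hzadjx : G.Adj z x := by
    have := ((mem_S_iff G v hv).1 hzS).1
    rw [hx] at this
    exact this.symm
  have hzlt : idx v hv z < i := ((mem_S_iff G v hv).1 hzS).2
  have hxz : x ≠ z := by
    intro hcon
    rw [← hcon, ← hidef] at hzlt
    exact absurd hzlt (lt_irrefl _)
  have hrxy : rank G v hv s(x, y) = (n + 1) * i.val + distS G v i y := rank_eq G v hv hlt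
  refine ⟨z, hyzadj, hzadjx, hxz, ?_, ?_⟩
  · -- s(y,z)
    right
    refine ⟨(SimpleGraph.mem_edgeSet _).2 hyzadj, ?_⟩
    rcases lt_trichotomy (idx v hv y) (idx v hv z) with hc | hc | hc
    · have hr : rank G v hv s(y, z) =
          (n + 1) * (idx v hv z).val + distS G v (idx v hv z) y := by
        rw [Sym2.eq_swap]
        exact rank_eq G v hv hc
      have hd := distS_le G v hv (idx v hv z) y
      have hmul : (n + 1) * ((idx v hv z).val + 1) ≤ (n + 1) * i.val :=
        Nat.mul_le_mul_left _ (by have := Fin.lt_def.1 hzlt; omega)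
      rw [Nat.mul_succ] at hmul
      rw [hr, hrxy]
      linarith
    · exact absurd (idx_inj v hv hc) hyzadj.ne
    · have hr : rank G v hv s(y, z) =
          (n + 1) * (idx v hv y).val + distS G v (idx v hv y) z := rank_eq G v hv hc
      have hd := distS_le G v hv (idx v hv y) z
      have hmul : (n + 1) * ((idx v hv y).val + 1) ≤ (n + 1) * i.val :=
        Nat.mul_le_mul_left _ (by have := Fin.lt_def.1 hlt; omega)
      rw [Nat.mul_succ] at hmul
      rw [hr, hrxy]
      linarith
  · -- s(x,z)
    right
    refine ⟨(SimpleGraph.mem_edgeSet _).2 hzadjx.symm, ?_⟩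
    have hr : rank G v hv s(x, z) = (n + 1) * i.val + distS G v i z := rank_eq G v hv hzlt
    rw [hr, hrxy]
    omega

lemma triangle [Fintype V] (hv : Function.Bijective v) (hh : Hyp G v) {e : Sym2 V}
    (he : e ∈ G.edgeSet \ (T G v hv).edgeSet) :
    ∃ x y z : V, e = s(x, y) ∧ G.Adj x y ∧ G.Adj y z ∧ G.Adj z x ∧ x ≠ z ∧
      (s(y, z) ∈ (T G v hv).edgeSet ∨
        (s(y, z) ∈ G.edgeSet ∧ rank G v hv s(y, z) < rank G v hv e)) ∧
      (s(x, z) ∈ (T G v hv).edgeSet ∨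
        (s(x, z) ∈ G.edgeSet ∧ rank G v hv s(x, z) < rank G v hv e)) := by
  induction e using Sym2.ind with
  | _ a b =>
    obtain ⟨heG, heT⟩ := he
    have hab : G.Adj a b := (SimpleGraph.mem_edgeSet _).1 heG
    rcases lt_trichotomy (idx v hv a) (idx v hv b) with hc | hc | hc
    · have hnt : s(b, a) ∉ (T G v hv).edgeSet := by rwa [Sym2.eq_swap]
      obtain ⟨z, h1, h2, h3, h4, h5⟩ := triangle_aux G v hv hh hab.symm hc hnt
      have hre : rank G v hv s(a, b) = rank G v hv s(b, a) := by rw [Sym2.eq_swap]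
      rw [hre]
      exact ⟨b, a, z, Sym2.eq_swap.symm, hab.symm, h1, h2, h3, h4, h5⟩
    · exact absurd (idx_inj v hv hc) hab.ne
    · obtain ⟨z, h1, h2, h3, h4, h5⟩ := triangle_aux G v hv hh hab hc heT
      exact ⟨a, b, z, rfl, hab, h1, h2, h3, h4, h5⟩

lemma edgeGirth_eq_three {V : Type} (G : SimpleGraph V) {x : V} (C : G.Walk x x)
    (hC : C.IsCycle) (hlen : C.length = 3) {e : Sym2 V} (hmem : e ∈ C.edges) :
    edgeGirth G e = 3 := by
  apply le_antisymm
  · have h1 : edgeGirth G e ≤ (C.length : ℕ∞) :=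
      iInf_le_of_le x (iInf_le_of_le C (iInf_le_of_le hC (iInf_le_of_le hmem le_rfl)))
    rw [hlen] at h1
    exact_mod_cast h1
  · rw [edgeGirth]
    refine le_iInf fun a => le_iInf fun p => le_iInf fun hc => le_iInf fun _ => ?_
    exact_mod_cast hc.three_le_length

end DPAux


/-- if the vertices of `G` can be ordered `v₀,…,v_n` so that each `v_i`
(`i ≥ 1`) has a neighbour among the earlier vertices and the subgraph induced by these
earlier neighbours is connected, then `G` is DP-good. -/
theorem dpGood_of_ordering {V : Type} [Fintype V] [DecidableEq V]
    (G : SimpleGraph V) (n : ℕ) (v : Fin (n + 1) → V) (hv : Function.Bijective v)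
    (h : ∀ i : Fin (n + 1), 0 < i.val →
      ({x | G.Adj (v i) x ∧ ∃ j : Fin (n + 1), j < i ∧ x = v j}.Nonempty ∧
       (G.induce {x | G.Adj (v i) x ∧ ∃ j : Fin (n + 1), j < i ∧ x = v j}).Connected)) :
    DPGood G := by
  classical
  have hh : DPAux.Hyp G v := fun i hi => h i hi
  have hTle : DPAux.T G v hv ≤ G := DPAux.T_le G v hv hh
  have hTconn : (DPAux.T G v hv).Connected := DPAux.T_connected G v hv hh
  have hTtree : (DPAux.T G v hv).IsTree := ⟨hTconn, DPAux.T_acyclic G v hv hh⟩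
  refine ⟨hTconn.mono hTle, DPAux.T G v hv, hTle, hTtree, ?_⟩
  set NT : Set (Sym2 V) := G.edgeSet \ (DPAux.T G v hv).edgeSet with hNT
  haveI : Fintype ↥NT := Fintype.ofFinite _
  set q := Fintype.card ↥NT with hq
  set ε : Fin q ≃ ↥NT := (Fintype.equivFin ↥NT).symm with hε
  set f : Fin q → ℕ := fun k => DPAux.rank G v hv ((ε k) : Sym2 V) with hf
  set σ := Tuple.sort f with hσ
  set e : Fin q → Sym2 V := fun k => ((ε (σ k)) : Sym2 V) with he
  have hmem : ∀ k, e k ∈ NT := fun k => (ε (σ k)).2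
  have hmono : ∀ j k : Fin q, j ≤ k → DPAux.rank G v hv (e j) ≤ DPAux.rank G v hv (e k) :=
    fun j k hjk => Tuple.monotone_sort f hjk
  have hrange : Set.range e = NT := by
    ext w
    constructor
    · rintro ⟨k, rfl⟩; exact hmem k
    · intro hw
      refine ⟨σ.symm (ε.symm ⟨w, hw⟩), ?_⟩
      simp [he]
  have hinj : Function.Injective e := by
    intro a b hab
    exact σ.injective (ε.injective (Subtype.ext hab))
  have hkey : ∀ (k : Fin q) (w : Sym2 V), w ∈ NT →
      DPAux.rank G v hv w < DPAux.rank G v hv (e k) → ∃ j, j < k ∧ e j = w := by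
    intro k w hw hlt
    obtain ⟨j, rfl⟩ : ∃ j, e j = w := by rw [← hrange] at hw; exact hw
    rcases lt_or_ge j k with hj | hj
    · exact ⟨j, hj, rfl⟩
    · exact absurd (hmono k j hj) (not_le.2 hlt)
  have htri := fun k => DPAux.triangle G v hv hh (hmem k)
  have hgirth : ∀ k, edgeGirth G (e k) = 3 := by
    intro k
    obtain ⟨x, y, z, hexy, hxy, hyz, hzx, hxz, _, _⟩ := htri k
    have hC := DPAux.triangle_isCycle G hxy hyz hzx hxz
    apply DPAux.edgeGirth_eq_three G _ hC (by simp)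
    rw [hexy]
    simp
  refine ⟨q, e, hinj, hrange, ?_, ?_⟩
  · intro i j _
    rw [hgirth i, hgirth j]
  · intro k
    obtain ⟨x, y, z, hexy, hxy, hyz, hzx, hxz, hside1, hside2⟩ := htri k
    have hC := DPAux.triangle_isCycle G hxy hyz hzx hxz
    refine ⟨3, ⟨1, by norm_num⟩, hgirth k, x, _, hC, ?_, by simp, ?_⟩
    · rw [hexy]; simp
    · intro f0 hf0
      simp only [SimpleGraph.Walk.edges_cons, SimpleGraph.Walk.edges_nil,
        List.mem_cons, List.not_mem_nil, or_false] at hf0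
      rcases hf0 with rfl | rfl | rfl
      · right
        exact ⟨k, le_rfl, hexy⟩
      · rcases hside1 with ht | ⟨hG2, hr2⟩
        · left; exact ht
        · by_cases ht : s(y, z) ∈ (DPAux.T G v hv).edgeSet
          · left; exact ht
          · obtain ⟨j, hjk, hje⟩ := hkey k s(y, z) ⟨hG2, ht⟩ hr2
            right; exact ⟨j, le_of_lt hjk, hje⟩
      · rw [show s(z, x) = s(x, z) from Sym2.eq_swap]
        rcases hside2 with ht | ⟨hG2, hr2⟩
        · left; exact ht
        · by_cases ht : s(x, z) ∈ (DPAux.T G v hv).edgeSet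
          · left; exact ht
          · obtain ⟨j, hjk, hje⟩ := hkey k s(x, z) ⟨hG2, ht⟩ hr2
            right; exact ⟨j, le_of_lt hjk, hje⟩
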